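/- Let G be a finite p-group such that the number of subgroups of G not belonging to CD(G) is at most p² + p. Then G has no elementary abelian subgroup of rank 3, i.e., no subgroup isomorphic to C_p × C_p × C_p. -/

import Mathlib

noncomputable def mCD {G : Type*} [Group G] (H : Subgroup G) : ℕ :=
  Nat.card H * Nat.card (Subgroup.centralizer (H : Set G))

noncomputable def mStar (G : Type*) [Group G] : ℕ :=
  sSup (Set.range fun H : Subgroup G => mCD H)

noncomputable def CD (G : Type*) [Group G] : Set (Subgroup G) :=
  {H | mCD H = mStar G}

noncomputable def deltaCD (G : Type*) [Group G] : ℕ :=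
  Nat.card {H : Subgroup G // H ∉ CD G}

section Aux

open Subgroup

variable {G : Type*} [Group G] [Finite G]

lemma mCD_le_mStar (H : Subgroup G) : mCD H ≤ mStar G :=
  le_csSup (Set.Finite.bddAbove (Set.finite_range _)) ⟨H, rfl⟩

lemma mCD_pos (H : Subgroup G) : 0 < mCD H :=
  Nat.mul_pos Nat.card_pos Nat.card_pos

lemma mStar_pos : 0 < mStar G :=
  lt_of_lt_of_le (mCD_pos ⊥) (mCD_le_mStar ⊥)

lemma card_mul_card_le_inf_sup (H K : Subgroup G) :
    Nat.card H * Nat.card K ≤ Nat.card ↥(H ⊓ K) * Nat.card ↥(H ⊔ K) := by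
  have h1 := Subgroup.relIndex_mul_relIndex ⊥ (H ⊓ K) H bot_le inf_le_left
  have h2 := Subgroup.relIndex_mul_relIndex ⊥ K (H ⊔ K) bot_le le_sup_right
  rw [relIndex_bot_left, relIndex_bot_left] at h1
  rw [relIndex_bot_left, relIndex_bot_left] at h2
  have h3 : (H ⊓ K).relIndex H = K.relIndex H := inf_relIndex_left H K
  have h5 : K.relIndex (H ⊔ K) ≠ 0 := by
    unfold Subgroup.relIndex
    exact Subgroup.index_ne_zero_of_finite
  have h4 : K.relIndex H ≤ K.relIndex (H ⊔ K) :=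
    Subgroup.relIndex_le_of_le_right le_sup_left h5
  calc Nat.card H * Nat.card K
      = Nat.card ↥(H ⊓ K) * (K.relIndex H * Nat.card K) := by
        rw [← mul_assoc, ← h3, h1]
    _ ≤ Nat.card ↥(H ⊓ K) * (K.relIndex (H ⊔ K) * Nat.card K) :=
        Nat.mul_le_mul_left _ (Nat.mul_le_mul_right _ h4)
    _ = Nat.card ↥(H ⊓ K) * Nat.card ↥(H ⊔ K) := by
        rw [mul_comm (K.relIndex (H ⊔ K)), h2]

lemma centralizer_sup' (H K : Subgroup G) :
    centralizer ((H ⊔ K : Subgroup G) : Set G) =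
      centralizer (H : Set G) ⊓ centralizer (K : Set G) := by
  apply le_antisymm
  · exact le_inf (centralizer_le (SetLike.coe_subset_coe.mpr le_sup_left))
      (centralizer_le (SetLike.coe_subset_coe.mpr le_sup_right))
  · intro g hg
    obtain ⟨hg1, hg2⟩ := Subgroup.mem_inf.mp hg
    rw [Subgroup.mem_centralizer_iff]
    intro h hh
    have hle : H ⊔ K ≤ centralizer {g} := sup_le
      (fun x hx => Subgroup.mem_centralizer_singleton_iff.mpr (hg1 x hx))
      (fun x hx => Subgroup.mem_centralizer_singleton_iff.mpr (hg2 x hx))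
    exact Subgroup.mem_centralizer_singleton_iff.mp (hle hh)

lemma mCD_bot : mCD (⊥ : Subgroup G) = Nat.card G := by
  have hc : centralizer (((⊥ : Subgroup G) : Set G)) = ⊤ := by
    rw [Subgroup.centralizer_eq_top_iff_subset, Subgroup.coe_bot,
      Set.singleton_subset_iff]
    exact (Subgroup.center G).one_mem
  rw [mCD, hc, Subgroup.card_bot, Subgroup.card_top, one_mul]

lemma mCD_top : mCD (⊤ : Subgroup G) = Nat.card G * Nat.card (Subgroup.center G) := by
  rw [mCD, Subgroup.card_top, Subgroup.coe_top, Subgroup.centralizer_univ]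

lemma bot_notin_CD (hc : Nontrivial (Subgroup.center G)) : (⊥ : Subgroup G) ∉ CD G := by
  intro hb
  have hb' : Nat.card G = mStar G := by rw [← mCD_bot]; exact hb
  have h1 : mCD (⊤ : Subgroup G) ≤ mStar G := mCD_le_mStar _
  rw [mCD_top] at h1
  have h2 : Nat.card G * 1 < Nat.card G * Nat.card (Subgroup.center G) :=
    Nat.mul_lt_mul_of_le_of_lt (le_refl _)
      (Finite.one_lt_card_iff_nontrivial.mpr hc) Nat.card_pos
  omega

lemma inf_mem_CD {H K : Subgroup G} (hH : H ∈ CD G) (hK : K ∈ CD G) :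
    H ⊓ K ∈ CD G := by
  have c1 := card_mul_card_le_inf_sup H K
  have c2 : Nat.card (centralizer (H : Set G)) * Nat.card (centralizer (K : Set G)) ≤
      Nat.card (centralizer ((H ⊓ K : Subgroup G) : Set G)) *
        Nat.card (centralizer ((H ⊔ K : Subgroup G) : Set G)) := by
    have h0 := card_mul_card_le_inf_sup (centralizer (H : Set G)) (centralizer (K : Set G))
    rw [← centralizer_sup'] at h0
    have hle : centralizer (H : Set G) ⊔ centralizer (K : Set G) ≤
        centralizer ((H ⊓ K : Subgroup G) : Set G) :=
      sup_le (centralizer_le (SetLike.coe_subset_coe.mpr inf_le_left))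
        (centralizer_le (SetLike.coe_subset_coe.mpr inf_le_right))
    calc Nat.card (centralizer (H : Set G)) * Nat.card (centralizer (K : Set G))
        ≤ Nat.card ↥(centralizer ((H ⊔ K : Subgroup G) : Set G)) *
            Nat.card ↥(centralizer (H : Set G) ⊔ centralizer (K : Set G)) := h0
      _ ≤ Nat.card ↥(centralizer ((H ⊔ K : Subgroup G) : Set G)) *
            Nat.card ↥(centralizer ((H ⊓ K : Subgroup G) : Set G)) :=
          Nat.mul_le_mul_left _ (Subgroup.card_le_of_le hle)
      _ = _ := mul_comm _ _
  have key : mCD H * mCD K ≤ mCD (H ⊓ K) * mCD (H ⊔ K) := by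
    unfold mCD
    calc Nat.card H * Nat.card (centralizer (H : Set G)) *
          (Nat.card K * Nat.card (centralizer (K : Set G)))
        = Nat.card H * Nat.card K *
            (Nat.card (centralizer (H : Set G)) * Nat.card (centralizer (K : Set G))) := by
          ring
      _ ≤ Nat.card ↥(H ⊓ K) * Nat.card ↥(H ⊔ K) *
            (Nat.card (centralizer ((H ⊓ K : Subgroup G) : Set G)) *
              Nat.card (centralizer ((H ⊔ K : Subgroup G) : Set G))) :=
          Nat.mul_le_mul c1 c2
      _ = Nat.card ↥(H ⊓ K) * Nat.card (centralizer ((H ⊓ K : Subgroup G) : Set G)) *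
            (Nat.card ↥(H ⊔ K) * Nat.card (centralizer ((H ⊔ K : Subgroup G) : Set G))) := by
          ring
  rw [hH, hK] at key
  have hs : mCD (H ⊔ K) ≤ mStar G := mCD_le_mStar _
  have hi : mCD (H ⊓ K) ≤ mStar G := mCD_le_mStar _
  have hpos : 0 < mStar G := mStar_pos
  have h2 : mStar G * mStar G ≤ mCD (H ⊓ K) * mStar G :=
    le_trans key (Nat.mul_le_mul_left _ hs)
  have h3 : mStar G ≤ mCD (H ⊓ K) := Nat.le_of_mul_le_mul_right h2 hpos
  exact le_antisymm hi h3

end Aux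

theorem stmt4 {p : ℕ} [Fact p.Prime] {G : Type*} [Group G] [Finite G]
    (hG : IsPGroup p G) (h : deltaCD G ≤ p ^ 2 + p) :
    ¬ ∃ H : Subgroup G,
        Nonempty (H ≃* Multiplicative (ZMod p × ZMod p × ZMod p)) := by
  classical
  rintro ⟨H, ⟨e⟩⟩
  have hp : p.Prime := Fact.out
  have hp2 : 2 ≤ p := hp.two_le
  have hpne : NeZero p := ⟨hp.ne_zero⟩
  set M := Multiplicative (ZMod p × ZMod p × ZMod p) with hM
  let ι : M →* G := H.subtype.comp e.symm.toMonoidHom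
  have hι : Function.Injective ι := H.subtype_injective.comp e.symm.injective
  have hMcard : Nat.card M = p ^ 3 := by
    rw [hM, Nat.card_congr Multiplicative.toAdd, Nat.card_prod, Nat.card_prod,
      Nat.card_zmod]
    ring
  have hMnt : Nontrivial M := by
    rw [← Finite.one_lt_card_iff_nontrivial, hMcard]
    calc 1 < 2 := one_lt_two
      _ ≤ p := hp2
      _ ≤ p ^ 3 := Nat.le_self_pow (by norm_num) p
  have hGnt : Nontrivial G := hι.nontrivial
  have hZ : Nontrivial (Subgroup.center G) := hG.center_nontrivial
  have hbot : (⊥ : Subgroup G) ∉ CD G := bot_notin_CD hZ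
  -- every nontrivial element of M has order p
  have hsmul : ∀ x : ZMod p × ZMod p × ZMod p, p • x = 0 := fun x => by
    rw [← Nat.cast_smul_eq_nsmul (ZMod p), ZMod.natCast_self, zero_smul]
  have hpow : ∀ v : M, v ^ p = 1 := fun v =>
    Multiplicative.toAdd.injective (by rw [toAdd_pow, toAdd_one]; exact hsmul _)
  have hord : ∀ v : M, v ≠ 1 → orderOf v = p := by
    intro v hv
    rcases hp.eq_one_or_self_of_dvd _ (orderOf_dvd_of_pow_eq_one (hpow v)) with h1 | h1
    · exact absurd (orderOf_eq_one_iff.mp h1) hv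
    · exact h1
  have hcard : ∀ v : M, v ≠ 1 → Nat.card (Subgroup.zpowers (ι v)) = p := by
    intro v hv
    rw [Nat.card_zpowers, orderOf_injective ι hι, hord v hv]
  -- Finset setup
  have : Fintype M := Fintype.ofFinite M
  have : Fintype G := Fintype.ofFinite G
  set s : Finset M := Finset.univ.filter (fun v => v ≠ 1) with hs
  have hscard : s.card = p ^ 3 - 1 := by
    rw [hs, Finset.filter_ne', Finset.card_erase_of_mem (Finset.mem_univ _),
      Finset.card_univ, ← Nat.card_eq_fintype_card, hMcard]
  set T : Finset (Subgroup G) := s.image (fun v => Subgroup.zpowers (ι v)) with hT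
  have hmem : ∀ v ∈ s, v ≠ 1 := fun v hv => (Finset.mem_filter.mp hv).2
  have hTcard' : ∀ P ∈ T, Nat.card P = p := by
    intro P hP
    obtain ⟨v, hv, rfl⟩ := Finset.mem_image.mp hP
    exact hcard v (hmem v hv)
  -- fiber bound
  have hfib : ∀ P ∈ T, (s.filter (fun v => Subgroup.zpowers (ι v) = P)).card ≤ p - 1 := by
    intro P hP
    set t := s.filter (fun v => Subgroup.zpowers (ι v) = P) with ht
    have himg : t.image (fun v => ι v) ⊆ ((P : Set G).toFinset).erase 1 := by
      intro g hg
      obtain ⟨v, hv, rfl⟩ := Finset.mem_image.mp hg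
      obtain ⟨hvs, hvP⟩ := Finset.mem_filter.mp hv
      refine Finset.mem_erase.mpr ⟨?_, ?_⟩
      · intro h1
        exact hmem v hvs (hι (by rw [h1, map_one]))
      · rw [Set.mem_toFinset]
        exact hvP ▸ Subgroup.mem_zpowers (ι v)
    have h1 : t.card = (t.image (fun v => ι v)).card :=
      (Finset.card_image_of_injective t hι).symm
    have h2 : ((P : Set G).toFinset).card = p := by
      rw [Set.toFinset_card]
      rw [← Nat.card_eq_fintype_card]
      exact (Nat.card_congr (Equiv.refl _)).trans (hTcard' P hP)
    calc t.card = (t.image (fun v => ι v)).card := h1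
      _ ≤ (((P : Set G).toFinset).erase 1).card := Finset.card_le_card himg
      _ = ((P : Set G).toFinset).card - 1 := Finset.card_erase_of_mem (by
          rw [Set.mem_toFinset]; exact P.one_mem)
      _ = p - 1 := by rw [h2]
  have hsT : s.card ≤ (p - 1) * T.card := Finset.card_le_mul_card_image s (p - 1) hfib
  -- T.card ≥ p^2 + p + 1
  obtain ⟨k, rfl⟩ : ∃ k, p = k + 2 := ⟨p - 2, by omega⟩
  have hTbig : (k + 2) ^ 2 + (k + 2) + 1 ≤ T.card := by
    have hcube : (k + 2) ^ 3 = (k + 1) * (k ^ 2 + 5 * k + 7) + 1 := by ring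
    have hk1 : k + 2 - 1 = k + 1 := by omega
    rw [hk1] at hsT
    have hs1 : (k + 1) * (k ^ 2 + 5 * k + 7) ≤ (k + 1) * T.card := by omega
    have h2 := Nat.le_of_mul_le_mul_left hs1 (Nat.succ_pos k)
    have hsq : (k + 2) ^ 2 = k ^ 2 + 4 * k + 4 := by ring
    omega
  -- at most one element of T is in CD G
  have huniq : ∀ P ∈ T, ∀ Q ∈ T, P ∈ CD G → Q ∈ CD G → P = Q := by
    intro P hP Q hQ hPc hQc
    by_contra hne
    have hd : Nat.card ↥(P ⊓ Q) ∣ k + 2 := by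
      rw [← hTcard' P hP]
      exact Subgroup.card_dvd_of_le inf_le_left
    have hinf : P ⊓ Q = ⊥ := by
      rcases hp.eq_one_or_self_of_dvd _ hd with h1 | h1
      · exact Subgroup.card_eq_one.mp h1
      · have heP : P ⊓ Q = P := Subgroup.eq_of_le_of_card_ge inf_le_left
          (by rw [hTcard' P hP, h1])
        have heQ : P ⊓ Q = Q := Subgroup.eq_of_le_of_card_ge inf_le_right
          (by rw [hTcard' Q hQ, h1])
        exact absurd (heP ▸ heQ) hne
    exact hbot (hinf ▸ inf_mem_CD hPc hQc)
  set T' : Finset (Subgroup G) := T.filter (fun P => ¬ P ∈ CD G) with hT'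
  have hTT' : T.card ≤ T'.card + 1 := by
    have hone : (T.filter (fun P => P ∈ CD G)).card ≤ 1 :=
      Finset.card_le_one.mpr (fun a ha b hb => by
        obtain ⟨ha1, ha2⟩ := Finset.mem_filter.mp ha
        obtain ⟨hb1, hb2⟩ := Finset.mem_filter.mp hb
        exact huniq a ha1 b hb1 ha2 hb2)
    have heq := Finset.card_filter_add_card_filter_not
      (s := T) (p := fun P => P ∈ CD G)
    rw [← hT'] at heq
    omega
  have hbotT' : (⊥ : Subgroup G) ∉ T' := by
    intro hb
    have := hTcard' ⊥ (Finset.mem_filter.mp hb).1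
    rw [Subgroup.card_bot] at this
    omega
  set U : Finset (Subgroup G) := insert ⊥ T' with hU
  have hUcard : (k + 2) ^ 2 + (k + 2) + 1 ≤ U.card := by
    rw [hU, Finset.card_insert_of_notMem hbotT']
    omega
  have hUnot : ∀ P ∈ U, P ∉ CD G := by
    intro P hP
    rcases Finset.mem_insert.mp hP with h1 | h1
    · exact h1 ▸ hbot
    · exact (Finset.mem_filter.mp h1).2
  -- conclude
  have hsub : (U : Set (Subgroup G)) ⊆ {P : Subgroup G | P ∉ CD G} :=
    fun P hP => hUnot P hP
  have hcardle : U.card ≤ Nat.card {H : Subgroup G // H ∉ CD G} := by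
    have h1 : Nat.card {H : Subgroup G // H ∉ CD G} =
        Set.ncard {P : Subgroup G | P ∉ CD G} := rfl
    rw [h1, ← Set.ncard_coe_finset U]
    exact Set.ncard_le_ncard hsub (Set.toFinite _)
  rw [deltaCD] at h
  omega
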